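/- Matrix content of Corollary 3 (DFT implementability): for N = 2^L with L ≥ 1, there exist a natural number L' ≥ 1, permutation matrices P_0,…,P_{L'} ∈ {0,1}^{N×N}, and block diagonal matrices D_1,…,D_{L'} ∈ ℂ^{N×N}, each of the form diag(D_{ℓ,1},…,D_{ℓ,C_ℓ}, e^{iθ_{ℓ,1}},…,e^{iθ_{ℓ,S_ℓ}}) with 2C_ℓ + S_ℓ = N and 2×2 blocks D_{ℓ,c} = (1/√2)·[[e^{iθ_{ℓ,c,11}}, e^{iθ_{ℓ,c,12}}],[e^{iθ_{ℓ,c,21}}, e^{iθ_{ℓ,c,22}}]] satisfying θ_{ℓ,c,22} = π − θ_{ℓ,c,11} + θ_{ℓ,c,12} + θ_{ℓ,c,21}, such that F_N = P_{L'}·D_{L'}·⋯·P_1·D_1·P_0. Moreover this holds with L' = L, all C_ℓ = N/2, all S_ℓ = 0, and phases θ_{ℓ,c,11} = θ_{ℓ,c,21} = 0, θ_{ℓ,c,12} = −2π((c−1) mod 2^{ℓ−1})/2^ℓ. -/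

import Mathlib

open Matrix Complex

/-- Cast a square matrix along an equality of sizes. -/
noncomputable def castM {m n : ℕ} (h : m = n) (A : Matrix (Fin m) (Fin m) ℂ) :
    Matrix (Fin n) (Fin n) ℂ :=
  Matrix.reindex (finCongr h) (finCongr h) A

/-- The block diagonal matrix
`diag(D_1, …, D_C, e^{iφ_1}, …, e^{iφ_S})` where
`D_c = (1/√2)·[[e^{iθ11(c)}, e^{iθ12(c)}],[e^{iθ21(c)}, e^{i(π − θ11(c) + θ12(c) + θ21(c))}]]`. -/
noncomputable def layerMatrix (C S : ℕ) (θ11 θ12 θ21 : Fin C → ℝ) (φ : Fin S → ℝ) :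
    Matrix (Fin (2 * C + S)) (Fin (2 * C + S)) ℂ :=
  Matrix.of fun i k =>
    if hi : i.val < 2 * C then
      if hk : k.val < 2 * C then
        if i.val / 2 = k.val / 2 then
          (1 / (Real.sqrt 2 : ℂ)) * Complex.exp (Complex.I *
            (((if i.val % 2 = 0 then
                  (if k.val % 2 = 0 then θ11 ⟨i.val / 2, by omega⟩
                   else θ12 ⟨i.val / 2, by omega⟩)
                else
                  (if k.val % 2 = 0 then θ21 ⟨i.val / 2, by omega⟩
                   else Real.pi - θ11 ⟨i.val / 2, by omega⟩ + θ12 ⟨i.val / 2, by omega⟩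
                        + θ21 ⟨i.val / 2, by omega⟩)) : ℝ) : ℂ))
        else 0
      else 0
    else if i = k then
      Complex.exp (Complex.I * ((φ ⟨i.val - 2 * C, by have := i.isLt; omega⟩ : ℝ) : ℂ))
    else 0

/-- A matrix is a permutation matrix if it is the 0/1 matrix of some permutation. -/
def IsPermutationMatrix {n : ℕ} (A : Matrix (Fin n) (Fin n) ℂ) : Prop :=
  ∃ σ : Equiv.Perm (Fin n), ∀ i k, A i k = if σ i = k then 1 else 0

/-- An `N×N` matrix has the layer form of Theorem 1: it is block diagonal
`diag(D_{1},…,D_{C}, e^{iθ_1},…,e^{iθ_S})` with `2C + S = N`, where each 2×2 block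
`D_c = (1/√2)·[[e^{iθ11}, e^{iθ12}],[e^{iθ21}, e^{iθ22}]]` satisfies
`θ22 = π − θ11 + θ12 + θ21`. -/
def LayerForm {N : ℕ} (Dm : Matrix (Fin N) (Fin N) ℂ) : Prop :=
  ∃ (C S : ℕ) (hCS : 2 * C + S = N) (θ11 θ12 θ21 : Fin C → ℝ) (φ : Fin S → ℝ),
    Dm = castM hCS (layerMatrix C S θ11 θ12 θ21 φ)

/-- The N×N DFT matrix, `[F_N]_{i,k} = e^{-2πi·i·k/N}/√N` (0-based indices). -/
noncomputable def dftMatrix (N : ℕ) : Matrix (Fin N) (Fin N) ℂ :=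
  Matrix.of fun i k =>
    Complex.exp (-(2 * Real.pi * Complex.I) * ((i.val : ℂ) * (k.val : ℂ)) / (N : ℂ))
      / (Real.sqrt N : ℂ)

/-! ### Auxiliary definitions and lemmas -/


/-- Permutation matrix of `σ`. -/
noncomputable def permM {n : ℕ} (σ : Equiv.Perm (Fin n)) : Matrix (Fin n) (Fin n) ℂ :=
  Matrix.of fun i k => if σ i = k then 1 else 0

/-- Layer `ι` at size `2^L` (the specific layer matrices of the theorem). -/
noncomputable def E (L ι : ℕ) : Matrix (Fin (2 ^ L)) (Fin (2 ^ L)) ℂ :=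
  if h : 2 * 2 ^ (L - 1) + 0 = 2 ^ L then
    castM h (layerMatrix (2 ^ (L - 1)) 0 (fun _ => 0)
      (fun c => -(2 * Real.pi) * ((c.val % 2 ^ ι : ℕ) : ℝ) / 2 ^ (ι + 1))
      (fun _ => 0) (fun _ => 0))
  else 1

/-- Direct sum of a matrix with itself, at size `n = 2*m`. -/
noncomputable def dsum {m n : ℕ} (h : n = 2 * m) (A : Matrix (Fin m) (Fin m) ℂ) :
    Matrix (Fin n) (Fin n) ℂ :=
  Matrix.of fun i k =>
    if hi : i.val < m then
      if hk : k.val < m then A ⟨i.val, hi⟩ ⟨k.val, hk⟩ else 0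
    else
      if hk : k.val < m then 0
      else A ⟨i.val - m, by have := i.isLt; omega⟩ ⟨k.val - m, by have := k.isLt; omega⟩

/-- Direct sum of a permutation with itself. -/
def dperm {m n : ℕ} (h : n = 2 * m) (σ : Equiv.Perm (Fin m)) : Equiv.Perm (Fin n) where
  toFun i := if hi : i.val < m then ⟨(σ ⟨i.val, hi⟩).val, by have := (σ ⟨i.val, hi⟩).isLt; omega⟩
    else ⟨m + (σ ⟨i.val - m, by have := i.isLt; omega⟩).val,
      by have := (σ ⟨i.val - m, by have := i.isLt; omega⟩).isLt; omega⟩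
  invFun i := if hi : i.val < m then
      ⟨(σ.symm ⟨i.val, hi⟩).val, by have := (σ.symm ⟨i.val, hi⟩).isLt; omega⟩
    else ⟨m + (σ.symm ⟨i.val - m, by have := i.isLt; omega⟩).val,
      by have := (σ.symm ⟨i.val - m, by have := i.isLt; omega⟩).isLt; omega⟩
  left_inv i := by
    by_cases hi : i.val < m
    · simp only [dif_pos hi, Fin.isLt, dif_pos, Fin.eta, Equiv.symm_apply_apply]
    · have h1 : ¬ (m + (σ ⟨i.val - m, by have := i.isLt; omega⟩).val < m) := by omega
      simp only [dif_neg hi, dif_neg h1, Nat.add_sub_cancel_left, Fin.eta,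
        Equiv.symm_apply_apply]
      exact Fin.ext (by simp; try omega)
  right_inv i := by
    by_cases hi : i.val < m
    · simp only [dif_pos hi, Fin.isLt, dif_pos, Fin.eta, Equiv.apply_symm_apply]
    · have h1 : ¬ (m + (σ.symm ⟨i.val - m, by have := i.isLt; omega⟩).val < m) := by omega
      simp only [dif_neg hi, dif_neg h1, Nat.add_sub_cancel_left, Fin.eta,
        Equiv.apply_symm_apply]
      exact Fin.ext (by simp; try omega)

/-- The interleaving permutation: `c ↦ 2c`, `c+m ↦ 2c+1`. -/
def ηperm {m n : ℕ} (h : n = 2 * m) : Equiv.Perm (Fin n) where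
  toFun i := if hi : i.val < m then ⟨2 * i.val, by omega⟩
    else ⟨2 * (i.val - m) + 1, by have := i.isLt; omega⟩
  invFun k := if hk : k.val % 2 = 0 then ⟨k.val / 2, by have := k.isLt; omega⟩
    else ⟨k.val / 2 + m, by have := k.isLt; omega⟩
  left_inv i := by
    by_cases hi : i.val < m
    · simp only [dif_pos hi]
      have : (2 * i.val) % 2 = 0 := by omega
      simp only [dif_pos this]
      exact Fin.ext (by simp; try omega)
    · simp only [dif_neg hi]
      have : ¬ ((2 * (i.val - m) + 1) % 2 = 0) := by omega
      simp only [dif_neg this]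
      exact Fin.ext (by simp; try omega)
  right_inv k := by
    by_cases hk : k.val % 2 = 0
    · simp only [dif_pos hk]
      have h2 : k.val / 2 < m := by have := k.isLt; omega
      simp only [dif_pos h2]
      exact Fin.ext (by simp; try omega)
    · simp only [dif_neg hk]
      have h2 : ¬ (k.val / 2 + m < m) := by omega
      simp only [dif_neg h2]
      exact Fin.ext (by simp; try (have := k.isLt; omega))


section Lemmas

variable {n m : ℕ}

theorem permM_mul_apply (σ : Equiv.Perm (Fin n)) (A : Matrix (Fin n) (Fin n) ℂ) (i k : Fin n) :
    (permM σ * A) i k = A (σ i) k := by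
  simp only [Matrix.mul_apply, permM, Matrix.of_apply, ite_mul, one_mul, zero_mul]
  exact (Finset.sum_ite_eq _ _ _).trans (by simp)

theorem mul_permM_apply (A : Matrix (Fin n) (Fin n) ℂ) (σ : Equiv.Perm (Fin n)) (i k : Fin n) :
    (A * permM σ) i k = A i (σ.symm k) := by
  simp only [Matrix.mul_apply, permM, Matrix.of_apply, mul_ite, mul_one, mul_zero]
  have h : ∀ j : Fin n, (σ j = k) = (j = σ.symm k) := fun j => by
    simp [Equiv.eq_symm_apply]
  simp only [h]
  exact (Finset.sum_ite_eq' _ _ _).trans (by simp)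

theorem permM_mul (σ τ : Equiv.Perm (Fin n)) :
    permM σ * permM τ = permM (σ.trans τ) := by
  ext i k
  rw [permM_mul_apply]
  rfl

theorem permM_refl : (permM (Equiv.refl (Fin n))) = 1 := by
  ext i k
  simp [permM, Matrix.one_apply]
  split_ifs with h <;> simp [h]

theorem isPerm_permM (σ : Equiv.Perm (Fin n)) : IsPermutationMatrix (permM σ) :=
  ⟨σ, fun _ _ => rfl⟩

theorem sum_split (h : n = 2 * m) (f : Fin n → ℂ) :
    ∑ j, f j = (∑ j : Fin m, f ⟨j.val, by omega⟩)
      + ∑ j : Fin m, f ⟨m + j.val, by omega⟩ := by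
  subst h
  rw [← Fintype.sum_equiv (finCongr (two_mul m).symm)
    (fun j => f ((finCongr (two_mul m).symm) j)) f (fun j => rfl)]
  rw [Fin.sum_univ_add]
  congr 1 <;>
    exact Finset.sum_congr rfl fun j _ => by
      congr 1 <;> try exact Fin.ext (by simp [Nat.add_comm])

theorem sum_two (f : Fin n → ℂ) (a b : Fin n) (hab : a ≠ b)
    (h : ∀ j, j ≠ a → j ≠ b → f j = 0) : ∑ j, f j = f a + f b := by
  rw [← Finset.sum_pair hab]
  refine (Finset.sum_subset (Finset.subset_univ _) fun j _ hj => ?_).symm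
  simp only [Finset.mem_insert, Finset.mem_singleton, not_or] at hj
  exact h j hj.1 hj.2

theorem dsum_app1 (h : n = 2 * m) (A : Matrix (Fin m) (Fin m) ℂ) (i k : Fin n)
    (hi : i.val < m) (hk : k.val < m) : dsum h A i k = A ⟨i.val, hi⟩ ⟨k.val, hk⟩ := by
  simp only [dsum, Matrix.of_apply, dif_pos hi, dif_pos hk]

theorem dsum_app2 (h : n = 2 * m) (A : Matrix (Fin m) (Fin m) ℂ) (i k : Fin n)
    (hi : i.val < m) (hk : ¬ k.val < m) : dsum h A i k = 0 := by
  simp only [dsum, Matrix.of_apply, dif_pos hi, dif_neg hk]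

theorem dsum_app3 (h : n = 2 * m) (A : Matrix (Fin m) (Fin m) ℂ) (i k : Fin n)
    (hi : ¬ i.val < m) (hk : k.val < m) : dsum h A i k = 0 := by
  simp only [dsum, Matrix.of_apply, dif_neg hi, dif_pos hk]

theorem dsum_app4 (h : n = 2 * m) (A : Matrix (Fin m) (Fin m) ℂ) (i k : Fin n)
    (hi : ¬ i.val < m) (hk : ¬ k.val < m) :
    dsum h A i k = A ⟨i.val - m, by have := i.isLt; omega⟩ ⟨k.val - m, by have := k.isLt; omega⟩ := by
  simp only [dsum, Matrix.of_apply, dif_neg hi, dif_neg hk]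

theorem dsum_mul (h : n = 2 * m) (A B : Matrix (Fin m) (Fin m) ℂ) :
    dsum h A * dsum h B = dsum h (A * B) := by
  ext i k
  rw [Matrix.mul_apply, sum_split h (fun j => dsum h A i j * dsum h B j k)]
  by_cases hi : i.val < m <;> by_cases hk : k.val < m
  · rw [dsum_app1 h _ i k hi hk, Matrix.mul_apply]
    rw [Finset.sum_eq_zero (f := fun j : Fin m =>
        dsum h A i (⟨m + j.val, by omega⟩ : Fin n) * dsum h B ⟨m + j.val, by omega⟩ k)
      (fun j _ => mul_eq_zero_of_left
        (dsum_app2 h A i _ hi (show ¬ (m + j.val < m) by omega)) _), add_zero]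
    refine Finset.sum_congr rfl fun j _ => ?_
    rw [dsum_app1 h A i _ hi (show j.val < m from j.isLt),
        dsum_app1 h B _ k (show j.val < m from j.isLt) hk]
  · rw [dsum_app2 h _ i k hi hk]
    rw [Finset.sum_eq_zero (f := fun j : Fin m =>
        dsum h A i (⟨j.val, by omega⟩ : Fin n) * dsum h B ⟨j.val, by omega⟩ k)
      (fun j _ => mul_eq_zero_of_right _
        (dsum_app2 h B _ k (show j.val < m from j.isLt) hk))]
    rw [Finset.sum_eq_zero (f := fun j : Fin m =>
        dsum h A i (⟨m + j.val, by omega⟩ : Fin n) * dsum h B ⟨m + j.val, by omega⟩ k)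
      (fun j _ => mul_eq_zero_of_left
        (dsum_app2 h A i _ hi (show ¬ (m + j.val < m) by omega)) _), add_zero]
  · rw [dsum_app3 h _ i k hi hk]
    rw [Finset.sum_eq_zero (f := fun j : Fin m =>
        dsum h A i (⟨j.val, by omega⟩ : Fin n) * dsum h B ⟨j.val, by omega⟩ k)
      (fun j _ => mul_eq_zero_of_left
        (dsum_app3 h A i _ hi (show j.val < m from j.isLt)) _)]
    rw [Finset.sum_eq_zero (f := fun j : Fin m =>
        dsum h A i (⟨m + j.val, by omega⟩ : Fin n) * dsum h B ⟨m + j.val, by omega⟩ k)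
      (fun j _ => mul_eq_zero_of_right _
        (dsum_app3 h B _ k (show ¬ (m + j.val < m) by omega) hk)), add_zero]
  · rw [dsum_app4 h _ i k hi hk, Matrix.mul_apply]
    rw [Finset.sum_eq_zero (f := fun j : Fin m =>
        dsum h A i (⟨j.val, by omega⟩ : Fin n) * dsum h B ⟨j.val, by omega⟩ k)
      (fun j _ => mul_eq_zero_of_left
        (dsum_app3 h A i _ hi (show j.val < m from j.isLt)) _), zero_add]
    refine Finset.sum_congr rfl fun j _ => ?_
    rw [dsum_app4 h A i _ hi (show ¬ (m + j.val < m) by omega),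
        dsum_app4 h B _ k (show ¬ (m + j.val < m) by omega) hk]
    simp

theorem dsum_permM (h : n = 2 * m) (σ : Equiv.Perm (Fin m)) :
    dsum h (permM σ) = permM (dperm h σ) := by
  ext i k
  by_cases hi : i.val < m <;> by_cases hk : k.val < m
  · rw [dsum_app1 h _ i k hi hk]
    simp only [permM, Matrix.of_apply, dperm, Equiv.coe_fn_mk, dif_pos hi, Fin.ext_iff]
  · rw [dsum_app2 h _ i k hi hk]
    simp only [permM, Matrix.of_apply, dperm, Equiv.coe_fn_mk, dif_pos hi, Fin.ext_iff]
    rw [if_neg (by have := (σ ⟨i.val, hi⟩).isLt; omega)]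
  · rw [dsum_app3 h _ i k hi hk]
    simp only [permM, Matrix.of_apply, dperm, Equiv.coe_fn_mk, dif_neg hi, Fin.ext_iff]
    rw [if_neg (by omega)]
  · rw [dsum_app4 h _ i k hi hk]
    simp only [permM, Matrix.of_apply, dperm, Equiv.coe_fn_mk, dif_neg hi, Fin.ext_iff]
    have hv := (σ ⟨i.val - m, by have := i.isLt; omega⟩).isLt
    by_cases he : (σ ⟨i.val - m, by have := i.isLt; omega⟩).val = k.val - m
    · rw [if_pos he, if_pos (by omega)]
    · rw [if_neg he, if_neg (by omega)]

theorem dsum_one (h : n = 2 * m) : dsum h (1 : Matrix (Fin m) (Fin m) ℂ) = 1 := by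
  ext i k
  by_cases hi : i.val < m <;> by_cases hk : k.val < m
  · rw [dsum_app1 h _ i k hi hk, Matrix.one_apply, Matrix.one_apply]
    have he : ((⟨i.val, hi⟩ : Fin m) = ⟨k.val, hk⟩) ↔ i = k := by
      rw [Fin.ext_iff, Fin.ext_iff]
    simp only [he]
  · rw [dsum_app2 h _ i k hi hk, Matrix.one_apply, if_neg (by intro hc; subst hc; exact hk hi)]
  · rw [dsum_app3 h _ i k hi hk, Matrix.one_apply, if_neg (by intro hc; subst hc; exact hi hk)]
  · rw [dsum_app4 h _ i k hi hk, Matrix.one_apply, Matrix.one_apply]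
    have he : ((⟨i.val - m, by have := i.isLt; omega⟩ : Fin m) = ⟨k.val - m, by have := k.isLt; omega⟩) ↔ i = k := by
      rw [Fin.ext_iff, Fin.ext_iff]
      simp only [Fin.val_mk]
      constructor <;> intro <;> omega
    simp only [he]

theorem dsum_list (h : n = 2 * m) (l : List (Matrix (Fin m) (Fin m) ℂ)) :
    dsum h l.prod = (l.map (dsum h)).prod := by
  induction l with
  | nil => simpa using dsum_one h
  | cons a t ih => rw [List.prod_cons, List.map_cons, List.prod_cons, ← ih, dsum_mul]

/-- The phase of block `c` in layer `ι`. -/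
noncomputable def phR (ι c : ℕ) : ℝ := -(2 * Real.pi) * ((c % 2 ^ ι : ℕ) : ℝ) / 2 ^ (ι + 1)

theorem E_def' (L ι : ℕ) (hL : 1 ≤ L) :
    E L ι = castM (by rw [Nat.add_zero, ← pow_succ', Nat.sub_add_cancel hL])
      (layerMatrix (2 ^ (L - 1)) 0 (fun _ => 0)
        (fun c => -(2 * Real.pi) * ((c.val % 2 ^ ι : ℕ) : ℝ) / 2 ^ (ι + 1))
        (fun _ => 0) (fun _ => 0)) := by
  have h2 : 2 * 2 ^ (L - 1) + 0 = 2 ^ L := by rw [Nat.add_zero, ← pow_succ']; congr 1; omega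
  rw [E, dif_pos h2]

theorem E_apply (L ι : ℕ) (hL : 1 ≤ L) (i k : Fin (2 ^ L)) :
    E L ι i k = if i.val / 2 = k.val / 2 then
      (1 / (Real.sqrt 2 : ℂ)) * Complex.exp (Complex.I *
        (((if i.val % 2 = 0 then
              (if k.val % 2 = 0 then (0 : ℝ) else phR ι (i.val / 2))
            else
              (if k.val % 2 = 0 then (0 : ℝ)
               else Real.pi - 0 + phR ι (i.val / 2) + 0)) : ℝ) : ℂ))
    else 0 := by
  have h2 : 2 * 2 ^ (L - 1) + 0 = 2 ^ L := by rw [Nat.add_zero, ← pow_succ']; congr 1; omega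
  rw [E, dif_pos h2, castM, Matrix.reindex_apply, Matrix.submatrix_apply]
  simp only [layerMatrix, Matrix.of_apply, finCongr_symm, finCongr_apply, Fin.coe_cast]
  rw [dif_pos (show i.val < 2 * 2 ^ (L - 1) by omega),
      dif_pos (show k.val < 2 * 2 ^ (L - 1) by omega)]
  rfl

theorem mod_sub (a b c t : ℕ) (hba : b ≤ a) (hbt : b = c * t) : (a - b) % c = a % c := by
  subst hbt
  conv_rhs => rw [show a = (a - c * t) + c * t by omega]
  rw [Nat.add_mul_mod_self_left]

theorem phR_congr (ι c c' : ℕ) (h : c % 2 ^ ι = c' % 2 ^ ι) : phR ι c = phR ι c' := by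
  rw [phR, phR, h]

theorem E_succ (L ι : ℕ) (h : 2 ^ (L + 1) = 2 * 2 ^ L) (hι : ι < L) :
    dsum h (E L ι) = E (L + 1) ι := by
  have hL : 1 ≤ L := by omega
  have hm : 2 ^ L = 2 * 2 ^ (L - 1) := by rw [← pow_succ']; congr 1; omega
  have hd : 2 ^ ι ∣ 2 ^ (L - 1) := pow_dvd_pow 2 (by omega)
  obtain ⟨t, ht⟩ := hd
  ext i k
  have hib := i.isLt
  have hkb := k.isLt
  by_cases hi : i.val < 2 ^ L <;> by_cases hk : k.val < 2 ^ L
  · rw [dsum_app1 h _ i k hi hk, E_apply L ι hL, E_apply (L + 1) ι (by omega)]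
  · rw [dsum_app2 h _ i k hi hk, E_apply (L + 1) ι (by omega),
      if_neg (show ¬ (i.val / 2 = k.val / 2) by omega)]
  · rw [dsum_app3 h _ i k hi hk, E_apply (L + 1) ι (by omega),
      if_neg (show ¬ (i.val / 2 = k.val / 2) by omega)]
  · rw [dsum_app4 h _ i k hi hk, E_apply L ι hL, E_apply (L + 1) ι (by omega)]
    simp only [Fin.val_mk]
    rw [show (i.val - 2 ^ L) % 2 = i.val % 2 by omega,
        show (k.val - 2 ^ L) % 2 = k.val % 2 by omega,
        phR_congr ι ((i.val - 2 ^ L) / 2) (i.val / 2)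
          (by
            rw [show (i.val - 2 ^ L) / 2 = i.val / 2 - 2 ^ (L - 1) by omega]
            exact mod_sub _ _ _ t (by omega) ht)]
    simp only [show ((i.val - 2 ^ L) / 2 = (k.val - 2 ^ L) / 2) ↔ (i.val / 2 = k.val / 2) from
      by constructor <;> intro <;> omega]

theorem ηapp_lt (h : n = 2 * m) (i : Fin n) (hi : i.val < m) :
    ηperm h i = ⟨2 * i.val, by omega⟩ := by
  simp only [ηperm, Equiv.coe_fn_mk, dif_pos hi]

theorem ηapp_ge (h : n = 2 * m) (i : Fin n) (hi : ¬ i.val < m) :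
    ηperm h i = ⟨2 * (i.val - m) + 1, by have := i.isLt; omega⟩ := by
  simp only [ηperm, Equiv.coe_fn_mk, dif_neg hi]

theorem ηsymm_even (h : n = 2 * m) (k : Fin n) (hk : k.val % 2 = 0) :
    (ηperm h).symm k = ⟨k.val / 2, by have := k.isLt; omega⟩ := by
  simp only [ηperm, Equiv.coe_fn_symm_mk, dif_pos hk]

theorem ηsymm_odd (h : n = 2 * m) (k : Fin n) (hk : ¬ k.val % 2 = 0) :
    (ηperm h).symm k = ⟨k.val / 2 + m, by have := k.isLt; omega⟩ := by
  simp only [ηperm, Equiv.coe_fn_symm_mk, dif_neg hk]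

theorem phR_top (L c : ℕ) (hc : c < 2 ^ L) :
    phR L c = -(2 * Real.pi) * (c : ℝ) / 2 ^ (L + 1) := by
  rw [phR, Nat.mod_eq_of_lt hc]

theorem E00 (L : ℕ) (x y : Fin (2 ^ (L + 1))) (c : ℕ) (hc : c < 2 ^ L)
    (hx : x.val = 2 * c) (hy : y.val = 2 * c) :
    E (L + 1) L x y = 1 / (Real.sqrt 2 : ℂ) := by
  rw [E_apply (L + 1) L (by omega), if_pos (by omega),
    if_pos (show x.val % 2 = 0 by omega), if_pos (show y.val % 2 = 0 by omega)]
  simp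

theorem E10 (L : ℕ) (x y : Fin (2 ^ (L + 1))) (c : ℕ) (hc : c < 2 ^ L)
    (hx : x.val = 2 * c + 1) (hy : y.val = 2 * c) :
    E (L + 1) L x y = 1 / (Real.sqrt 2 : ℂ) := by
  rw [E_apply (L + 1) L (by omega), if_pos (by omega),
    if_neg (show ¬ x.val % 2 = 0 by omega), if_pos (show y.val % 2 = 0 by omega)]
  simp

theorem E01 (L : ℕ) (x y : Fin (2 ^ (L + 1))) (c : ℕ) (hc : c < 2 ^ L)
    (hx : x.val = 2 * c) (hy : y.val = 2 * c + 1) :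
    E (L + 1) L x y = 1 / (Real.sqrt 2 : ℂ)
      * Complex.exp (Complex.I * ((phR L c : ℝ) : ℂ)) := by
  rw [E_apply (L + 1) L (by omega), if_pos (by omega),
    if_pos (show x.val % 2 = 0 by omega), if_neg (show ¬ y.val % 2 = 0 by omega),
    show x.val / 2 = c by omega]

theorem E11 (L : ℕ) (x y : Fin (2 ^ (L + 1))) (c : ℕ) (hc : c < 2 ^ L)
    (hx : x.val = 2 * c + 1) (hy : y.val = 2 * c + 1) :
    E (L + 1) L x y = 1 / (Real.sqrt 2 : ℂ)
      * Complex.exp (Complex.I * ((Real.pi - 0 + phR L c + 0 : ℝ) : ℂ)) := by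
  rw [E_apply (L + 1) L (by omega), if_pos (by omega),
    if_neg (show ¬ x.val % 2 = 0 by omega), if_neg (show ¬ y.val % 2 = 0 by omega),
    show x.val / 2 = c by omega]

theorem dft_apply (N : ℕ) (x y : Fin N) :
    dftMatrix N x y =
      Complex.exp (-(2 * Real.pi * Complex.I) * ((x.val : ℂ) * (y.val : ℂ)) / (N : ℂ))
        / (Real.sqrt N : ℂ) := rfl

theorem exp_eq_exp_of (z w : ℂ) (nn : ℤ) (hzw : z = w + nn * (2 * (Real.pi : ℂ) * Complex.I)) :
    Complex.exp z = Complex.exp w := by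
  rw [hzw, Complex.exp_add, Complex.exp_int_mul_two_pi_mul_I, mul_one]

set_option maxHeartbeats 1600000 in
theorem dft_step (L : ℕ) (h : 2 ^ (L + 1) = 2 * 2 ^ L) :
    dftMatrix (2 ^ (L + 1)) =
      permM (ηperm h) * E (L + 1) L * permM (ηperm h).symm
        * dsum h (dftMatrix (2 ^ L)) * permM (ηperm h) := by
  have hm1 : 0 < 2 ^ L := Nat.pow_pos (by norm_num)
  have hM : ((2 ^ L : ℕ) : ℂ) ≠ 0 := Nat.cast_ne_zero.mpr (by omega)
  have hM2 : ((2 : ℂ)) ^ L ≠ 0 := pow_ne_zero _ (by norm_num)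
  have hs : (Real.sqrt (2 ^ (L + 1) : ℕ) : ℂ)
      = (Real.sqrt 2 : ℂ) * (Real.sqrt (2 ^ L : ℕ) : ℂ) := by
    have h1 : ((2 ^ (L + 1) : ℕ) : ℝ) = 2 * ((2 ^ L : ℕ) : ℝ) := by exact_mod_cast h
    rw [h1, Real.sqrt_mul (by norm_num), Complex.ofReal_mul]
  have hNC : ((2 ^ (L + 1) : ℕ) : ℂ) = 2 * ((2 ^ L : ℕ) : ℂ) := by exact_mod_cast h
  have hC : ((2 ^ L : ℕ) : ℂ) = (2 : ℂ) ^ L := by push_cast; ring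
  ext i k
  rw [mul_permM_apply, Matrix.mul_apply]
  have hEnt : ∀ j, (permM (ηperm h) * E (L + 1) L * permM (ηperm h).symm) i j
      = E (L + 1) L (ηperm h i) (ηperm h j) := fun j => by
    rw [mul_permM_apply, permM_mul_apply, Equiv.symm_symm]
  simp only [hEnt]
  have hkb := k.isLt
  have hib := i.isLt
  by_cases hi : i.val < 2 ^ L
  · -- lower half row: block c = i.val
    have hvan : ∀ j : Fin (2 ^ (L + 1)), j ≠ ⟨i.val, by omega⟩ → j ≠ ⟨i.val + 2 ^ L, by omega⟩ →
        E (L + 1) L (ηperm h i) (ηperm h j)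
          * dsum h (dftMatrix (2 ^ L)) j ((ηperm h).symm k) = 0 := by
      intro j hja hjb
      have hja' : j.val ≠ i.val := fun hc => hja (Fin.ext hc)
      have hjb' : j.val ≠ i.val + 2 ^ L := fun hc => hjb (Fin.ext hc)
      have hjlt := j.isLt
      apply mul_eq_zero_of_left
      by_cases hj : j.val < 2 ^ L
      · rw [ηapp_lt h i hi, ηapp_lt h j hj, E_apply (L + 1) L (by omega),
          if_neg (by simp only [Fin.val_mk]; omega)]
      · rw [ηapp_lt h i hi, ηapp_ge h j hj, E_apply (L + 1) L (by omega),
          if_neg (by simp only [Fin.val_mk]; omega)]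
    rw [sum_two _ ⟨i.val, by omega⟩ ⟨i.val + 2 ^ L, by omega⟩
      (by simp only [ne_eq, Fin.ext_iff, Fin.val_mk]; omega) hvan]
    have hEa : E (L + 1) L (ηperm h i) (ηperm h ⟨i.val, by omega⟩)
        = 1 / (Real.sqrt 2 : ℂ) :=
      E00 L _ _ i.val hi (by rw [ηapp_lt h i hi]) (by rw [ηapp_lt h _ hi])
    have hEb : E (L + 1) L (ηperm h i) (ηperm h ⟨i.val + 2 ^ L, by omega⟩)
        = 1 / (Real.sqrt 2 : ℂ) * Complex.exp (Complex.I * ((phR L i.val : ℝ) : ℂ)) :=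
      E01 L _ _ i.val hi (by rw [ηapp_lt h i hi])
        (by rw [ηapp_ge h _ (by simp only [Fin.val_mk]; omega)]
            simp only [Fin.val_mk]; omega)
    rw [hEa, hEb]
    by_cases hk2 : k.val % 2 = 0
    · rw [ηsymm_even h k hk2,
        dsum_app1 h _ _ _ (show i.val < 2 ^ L from hi) (show k.val / 2 < 2 ^ L by omega),
        dsum_app3 h _ _ _ (show ¬ (i.val + 2 ^ L < 2 ^ L) by omega)
          (show k.val / 2 < 2 ^ L by omega), mul_zero, add_zero,
        dft_apply, dft_apply]
      simp only [Fin.val_mk]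
      rw [hs, div_mul_div_comm, one_mul]
      rw [show ((k.val : ℕ) : ℂ) = 2 * ((k.val / 2 : ℕ) : ℂ) by
        exact_mod_cast (show k.val = 2 * (k.val / 2) by omega)]
      congr 1
      apply exp_eq_exp_of _ _ 0
      rw [hNC, hC]
      push_cast
      field_simp
      ring
    · rw [ηsymm_odd h k hk2,
        dsum_app2 h _ _ _ (show i.val < 2 ^ L from hi)
          (show ¬ (k.val / 2 + 2 ^ L < 2 ^ L) by omega), mul_zero, zero_add,
        dsum_app4 h _ _ _ (show ¬ (i.val + 2 ^ L < 2 ^ L) by omega)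
          (show ¬ (k.val / 2 + 2 ^ L < 2 ^ L) by omega), dft_apply, dft_apply]
      simp only [Fin.val_mk]
      rw [show i.val + 2 ^ L - 2 ^ L = i.val by omega,
          show k.val / 2 + 2 ^ L - 2 ^ L = k.val / 2 by omega]
      have hexp : Complex.exp (-(2 * Real.pi * Complex.I) * ((i.val : ℂ) * (k.val : ℂ))
            / ((2 ^ (L + 1) : ℕ) : ℂ))
          = Complex.exp (Complex.I * ((phR L i.val : ℝ) : ℂ))
            * Complex.exp (-(2 * Real.pi * Complex.I)
              * ((i.val : ℂ) * ((k.val / 2 : ℕ) : ℂ)) / ((2 ^ L : ℕ) : ℂ)) := by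
        rw [← Complex.exp_add]
        apply exp_eq_exp_of _ _ 0
        rw [hNC, hC, phR_top L i.val hi,
          show ((k.val : ℕ) : ℂ) = 2 * ((k.val / 2 : ℕ) : ℂ) + 1 by
            exact_mod_cast (show k.val = 2 * (k.val / 2) + 1 by omega)]
        push_cast
        field_simp
        ring
      rw [hexp, hs]
      ring
  · -- upper half row: block c = i.val - 2^L
    have hvan : ∀ j : Fin (2 ^ (L + 1)), j ≠ ⟨i.val - 2 ^ L, by omega⟩ → j ≠ ⟨i.val, by omega⟩ →
        E (L + 1) L (ηperm h i) (ηperm h j)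
          * dsum h (dftMatrix (2 ^ L)) j ((ηperm h).symm k) = 0 := by
      intro j hja hjb
      have hja' : j.val ≠ i.val - 2 ^ L := fun hc => hja (Fin.ext hc)
      have hjb' : j.val ≠ i.val := fun hc => hjb (Fin.ext hc)
      have hjlt := j.isLt
      apply mul_eq_zero_of_left
      by_cases hj : j.val < 2 ^ L
      · rw [ηapp_ge h i hi, ηapp_lt h j hj, E_apply (L + 1) L (by omega),
          if_neg (by simp only [Fin.val_mk]; omega)]
      · rw [ηapp_ge h i hi, ηapp_ge h j hj, E_apply (L + 1) L (by omega),
          if_neg (by simp only [Fin.val_mk]; omega)]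
    rw [sum_two _ ⟨i.val - 2 ^ L, by omega⟩ ⟨i.val, by omega⟩
      (by simp only [ne_eq, Fin.ext_iff, Fin.val_mk]; omega) hvan]
    have hEa : E (L + 1) L (ηperm h i) (ηperm h ⟨i.val - 2 ^ L, by omega⟩)
        = 1 / (Real.sqrt 2 : ℂ) :=
      E10 L _ _ (i.val - 2 ^ L) (by omega) (by rw [ηapp_ge h i hi])
        (by rw [ηapp_lt h _ (show i.val - 2 ^ L < 2 ^ L by omega)])
    have hEb : E (L + 1) L (ηperm h i) (ηperm h ⟨i.val, by omega⟩)
        = 1 / (Real.sqrt 2 : ℂ)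
          * Complex.exp (Complex.I * ((Real.pi - 0 + phR L (i.val - 2 ^ L) + 0 : ℝ) : ℂ)) :=
      E11 L _ _ (i.val - 2 ^ L) (by omega) (by rw [ηapp_ge h i hi])
        (by rw [ηapp_ge h _ hi])
    rw [hEa, hEb]
    by_cases hk2 : k.val % 2 = 0
    · rw [ηsymm_even h k hk2,
        dsum_app1 h _ _ _ (show i.val - 2 ^ L < 2 ^ L by omega)
          (show k.val / 2 < 2 ^ L by omega),
        dsum_app3 h _ _ _ (show ¬ (i.val < 2 ^ L) from hi)
          (show k.val / 2 < 2 ^ L by omega), mul_zero, add_zero,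
        dft_apply, dft_apply]
      simp only [Fin.val_mk]
      obtain ⟨d, hd⟩ : ∃ d, k.val / 2 = d := ⟨_, rfl⟩
      rw [hd, hs, div_mul_div_comm, one_mul]
      rw [show ((k.val : ℕ) : ℂ) = 2 * ((d : ℕ) : ℂ) by
        exact_mod_cast (show k.val = 2 * d by omega)]
      rw [show ((i.val : ℕ) : ℂ) = ((i.val - 2 ^ L : ℕ) : ℂ) + ((2 ^ L : ℕ) : ℂ) by
        exact_mod_cast (show i.val = (i.val - 2 ^ L) + 2 ^ L by omega)]
      congr 1
      apply exp_eq_exp_of _ _ (-(d : ℤ))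
      rw [hNC, hC]
      push_cast
      field_simp
      ring
    · rw [ηsymm_odd h k hk2,
        dsum_app2 h _ _ _ (show i.val - 2 ^ L < 2 ^ L by omega)
          (show ¬ (k.val / 2 + 2 ^ L < 2 ^ L) by omega), mul_zero, zero_add,
        dsum_app4 h _ _ _ (show ¬ (i.val < 2 ^ L) from hi)
          (show ¬ (k.val / 2 + 2 ^ L < 2 ^ L) by omega), dft_apply, dft_apply]
      simp only [Fin.val_mk]
      obtain ⟨d, hd⟩ : ∃ d, k.val / 2 = d := ⟨_, rfl⟩
      rw [hd, show d + 2 ^ L - 2 ^ L = d by omega]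
      have hexp : Complex.exp (-(2 * Real.pi * Complex.I) * ((i.val : ℂ) * (k.val : ℂ))
            / ((2 ^ (L + 1) : ℕ) : ℂ))
          = Complex.exp (Complex.I * ((Real.pi - 0 + phR L (i.val - 2 ^ L) + 0 : ℝ) : ℂ))
            * Complex.exp (-(2 * Real.pi * Complex.I)
              * (((i.val - 2 ^ L : ℕ) : ℂ) * ((d : ℕ) : ℂ)) / ((2 ^ L : ℕ) : ℂ)) := by
        rw [← Complex.exp_add]
        apply exp_eq_exp_of _ _ (-(d : ℤ) - 1)
        rw [hNC, hC, phR_top L (i.val - 2 ^ L) (by omega),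
          show ((k.val : ℕ) : ℂ) = 2 * ((d : ℕ) : ℂ) + 1 by
            exact_mod_cast (show k.val = 2 * d + 1 by omega),
          show ((i.val : ℕ) : ℂ) = ((i.val - 2 ^ L : ℕ) : ℂ) + ((2 ^ L : ℕ) : ℂ) by
            exact_mod_cast (show i.val = (i.val - 2 ^ L) + 2 ^ L by omega)]
        push_cast
        field_simp
        ring
      rw [hexp, hs]
      ring

theorem prod_finRange_succ {M : Type*} [Monoid M] (L : ℕ) (f : Fin (L + 1) → M) :
    ((List.finRange (L + 1)).reverse.map f).prod
      = f (Fin.last L) * ((List.finRange L).reverse.map (fun i => f i.castSucc)).prod := by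
  rw [List.finRange_succ_last, List.reverse_append, List.map_append, List.prod_append]
  simp [List.map_reverse, List.map_map, Function.comp_def]

/-- The permutations for layer `L+1` built from those for layer `L`. -/
def sigStep {L : ℕ} (h : 2 ^ (L + 1) = 2 * 2 ^ L) (σ : Fin (L + 1) → Equiv.Perm (Fin (2 ^ L)))
    (j : Fin (L + 2)) : Equiv.Perm (Fin (2 ^ (L + 1))) :=
  if hj : j.val = L + 1 then ηperm h
  else ((if j.val = L then (ηperm h).symm else Equiv.refl _).trans
       ((dperm h (σ ⟨j.val, by have := j.isLt; omega⟩)).trans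
        (if j.val = 0 then ηperm h else Equiv.refl _)))

theorem sigStep_top {L : ℕ} (h : 2 ^ (L + 1) = 2 * 2 ^ L)
    (σ : Fin (L + 1) → Equiv.Perm (Fin (2 ^ L))) :
    sigStep h σ (Fin.last L).succ = ηperm h := by
  rw [sigStep, dif_pos (by simp)]

theorem sigStep_mid {L : ℕ} (h : 2 ^ (L + 1) = 2 * 2 ^ L)
    (σ : Fin (L + 1) → Equiv.Perm (Fin (2 ^ L))) (j : Fin (L + 2)) (j' : Fin (L + 1))
    (hv : j.val = j'.val) (h1 : j.val ≠ L + 1) (h2 : j.val ≠ L) (h3 : j.val ≠ 0) :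
    sigStep h σ j = dperm h (σ j') := by
  rw [sigStep, dif_neg h1, if_neg h2, if_neg h3, Equiv.refl_trans, Equiv.trans_refl,
    show (⟨j.val, by have := j.isLt; omega⟩ : Fin (L + 1)) = j' from Fin.ext (by simp [hv])]

theorem sigStep_Lslot {L : ℕ} (h : 2 ^ (L + 1) = 2 * 2 ^ L)
    (σ : Fin (L + 1) → Equiv.Perm (Fin (2 ^ L))) (j : Fin (L + 2)) (j' : Fin (L + 1))
    (hv : j.val = j'.val) (h1 : j.val ≠ L + 1) (h2 : j.val = L) (h3 : j.val ≠ 0) :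
    sigStep h σ j = (ηperm h).symm.trans (dperm h (σ j')) := by
  rw [sigStep, dif_neg h1, if_pos h2, if_neg h3, Equiv.trans_refl,
    show (⟨j.val, by have := j.isLt; omega⟩ : Fin (L + 1)) = j' from Fin.ext (by simp [hv])]

theorem sigStep_zeroS {L : ℕ} (h : 2 ^ (L + 1) = 2 * 2 ^ L)
    (σ : Fin (L + 1) → Equiv.Perm (Fin (2 ^ L))) (hL : L ≠ 0) :
    sigStep h σ 0 = (dperm h (σ 0)).trans (ηperm h) := by
  have h0 : (0 : Fin (L + 2)).val = 0 := Fin.val_zero _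
  rw [sigStep, dif_neg (by omega), if_neg (by omega), if_pos h0,
    Equiv.refl_trans,
    show (⟨(0 : Fin (L + 2)).val, by rw [h0]; omega⟩ : Fin (L + 1)) = 0
      from Fin.ext (by simp [h0])]

theorem sigStep_zero0 (h : 2 ^ (0 + 1) = 2 * 2 ^ 0)
    (σ : Fin 1 → Equiv.Perm (Fin (2 ^ 0))) :
    sigStep h σ 0 = (ηperm h).symm.trans ((dperm h (σ 0)).trans (ηperm h)) := by
  rw [sigStep, dif_neg (by decide), if_pos (by decide), if_pos (by decide),
    show (⟨(0 : Fin (0 + 2)).val, by decide⟩ : Fin (0 + 1)) = 0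
      from Fin.ext (by decide)]

theorem step_claim (L : ℕ) : ∀ (h : 2 ^ (L + 1) = 2 * 2 ^ L)
    (σ : Fin (L + 1) → Equiv.Perm (Fin (2 ^ L))),
    ((List.finRange L).reverse.map
        (fun i : Fin L => permM (sigStep h σ i.castSucc.succ) * E (L + 1) i.castSucc.val)).prod
      * permM (sigStep h σ 0)
    = permM (ηperm h).symm
      * (((List.finRange L).reverse.map
          (fun i : Fin L => permM (dperm h (σ i.succ)) * E (L + 1) i.val)).prod
        * (permM (dperm h (σ 0)) * permM (ηperm h))) := by
  cases L with
  | zero =>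
    intro h σ
    simp only [List.finRange_zero, List.reverse_nil, List.map_nil, List.prod_nil, one_mul]
    rw [sigStep_zero0 h σ, ← permM_mul, ← permM_mul]
  | succ K =>
    intro h σ
    rw [prod_finRange_succ K, prod_finRange_succ K]
    beta_reduce
    have h1 : sigStep h σ (Fin.last K).castSucc.succ
        = (ηperm h).symm.trans (dperm h (σ (Fin.last K).succ)) :=
      sigStep_Lslot h σ _ _ (by simp) (by simp; try omega) (by simp; try omega) (by simp; try omega)
    have h2 : ∀ i : Fin K, sigStep h σ i.castSucc.castSucc.succ
        = dperm h (σ i.castSucc.succ) := fun i => by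
      have hik := i.isLt
      exact sigStep_mid h σ _ _ (by simp) (by simp; try omega) (by simp; try omega) (by simp; try omega)
    have h3 : sigStep h σ 0 = (dperm h (σ 0)).trans (ηperm h) := sigStep_zeroS h σ (by omega)
    have h4 : ((List.finRange K).reverse.map
          (fun i : Fin K => permM (sigStep h σ i.castSucc.castSucc.succ)
            * E (K + 1 + 1) i.castSucc.castSucc.val)).prod
        = ((List.finRange K).reverse.map
          (fun i : Fin K => permM (dperm h (σ i.castSucc.succ))
            * E (K + 1 + 1) i.castSucc.val)).prod := by
      congr 1
      apply List.map_congr_left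
      intro i _
      rw [h2 i]
      simp
    rw [h1, h3, h4, ← permM_mul, ← permM_mul]
    simp only [Fin.coe_castSucc, Fin.val_last, Fin.val_succ, mul_assoc]

theorem key (L : ℕ) : ∃ σ : Fin (L + 1) → Equiv.Perm (Fin (2 ^ L)),
    dftMatrix (2 ^ L) = ((List.finRange L).reverse.map
      (fun i : Fin L => permM (σ i.succ) * E L i.val)).prod * permM (σ 0) := by
  induction L with
  | zero =>
    refine ⟨fun _ => Equiv.refl _, ?_⟩
    rw [List.finRange_zero]
    simp only [List.reverse_nil, List.map_nil, List.prod_nil, one_mul, permM_refl]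
    ext i k
    have hik : i = k := Fin.ext (by
      have h1 := i.isLt; have h2 := k.isLt; norm_num at h1 h2; omega)
    subst hik
    rw [dft_apply, Matrix.one_apply_eq,
      show ((i.val : ℕ) : ℂ) = 0 by exact_mod_cast (show i.val = 0 by omega)]
    norm_num
  | succ L ih =>
    obtain ⟨σ, hσ⟩ := ih
    have h : 2 ^ (L + 1) = 2 * 2 ^ L := by rw [pow_succ, Nat.mul_comm]
    refine ⟨sigStep h σ, ?_⟩
    have hPr : dsum h (dftMatrix (2 ^ L))
        = ((List.finRange L).reverse.map
            (fun i : Fin L => permM (dperm h (σ i.succ)) * E (L + 1) i.val)).prod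
          * permM (dperm h (σ 0)) := by
      rw [hσ, ← dsum_mul h, dsum_permM h, dsum_list h, List.map_map]
      have hfun : ((dsum h) ∘ (fun i : Fin L => permM (σ i.succ) * E L i.val))
          = (fun i : Fin L => permM (dperm h (σ i.succ)) * E (L + 1) i.val) := by
        funext i
        show dsum h (permM (σ i.succ) * E L i.val) = _
        rw [← dsum_mul h, dsum_permM h, E_succ L i.val h i.isLt]
      rw [hfun]
    rw [dft_step L h, hPr,
      prod_finRange_succ (L) (fun i : Fin (L + 1) => permM (sigStep h σ i.succ) * E (L + 1) i.val)]
    beta_reduce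
    rw [sigStep_top h σ, Fin.val_last]
    simp only [mul_assoc]
    rw [step_claim L h σ]


end Lemmas

/-- **Matrix content of Corollary 3 (DFT implementability)**: for `N = 2^L`, `L ≥ 1`, the
DFT matrix has a decomposition `F_N = P_{L'}·D_{L'}·⋯·P_1·D_1·P_0` with permutation
matrices `P_ℓ` and layer matrices `D_ℓ` as in Theorem 1; moreover this holds with `L' = L`,
all `C_ℓ = N/2`, `S_ℓ = 0`, and phases `θ_{ℓ,c,11} = θ_{ℓ,c,21} = 0`,
`θ_{ℓ,c,12} = −2π((c−1) mod 2^{ℓ−1})/2^ℓ` (0-based: block `c` of layer `ℓ = i+1` has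
`θ12 = −2π(c mod 2^i)/2^{i+1}`). -/
theorem dft_implementable (L : ℕ) (hL : 1 ≤ L) :
    (∃ L' : ℕ, 1 ≤ L' ∧
      ∃ (P : Fin (L' + 1) → Matrix (Fin (2 ^ L)) (Fin (2 ^ L)) ℂ)
        (D : Fin L' → Matrix (Fin (2 ^ L)) (Fin (2 ^ L)) ℂ),
        (∀ ℓ, IsPermutationMatrix (P ℓ)) ∧ (∀ ℓ, LayerForm (D ℓ)) ∧
        dftMatrix (2 ^ L) =
          ((List.finRange L').reverse.map fun i => P i.succ * D i).prod * P 0)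
    ∧
    (∃ P : Fin (L + 1) → Matrix (Fin (2 ^ L)) (Fin (2 ^ L)) ℂ,
      (∀ ℓ, IsPermutationMatrix (P ℓ)) ∧
      dftMatrix (2 ^ L) =
        ((List.finRange L).reverse.map fun i : Fin L =>
            P i.succ *
              castM
                (show 2 * 2 ^ (L - 1) + 0 = 2 ^ L by
                  rw [Nat.add_zero, ← pow_succ']
                  congr 1
                  omega)
                (layerMatrix (2 ^ (L - 1)) 0
                  (fun _ => 0)
                  (fun c => -(2 * Real.pi) * ((c.val % 2 ^ i.val : ℕ) : ℝ) / 2 ^ (i.val + 1))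
                  (fun _ => 0)
                  (fun _ => 0))).prod
          * P 0) := by
  obtain ⟨σ, hσ⟩ := key L
  constructor
  · refine ⟨L, hL, fun ℓ => permM (σ ℓ), fun i => E L i.val,
      fun ℓ => isPerm_permM _, fun ℓ => ?_, hσ⟩
    exact ⟨2 ^ (L - 1), 0,
      (by rw [Nat.add_zero, ← pow_succ']; congr 1; omega), _, _, _, _, E_def' L ℓ.val hL⟩
  · refine ⟨fun ℓ => permM (σ ℓ), fun ℓ => isPerm_permM _, ?_⟩
    have hmap : (fun i : Fin L => permM (σ i.succ) * E L i.val)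
        = (fun i : Fin L => permM (σ i.succ) *
            castM
              (show 2 * 2 ^ (L - 1) + 0 = 2 ^ L by
                rw [Nat.add_zero, ← pow_succ']
                congr 1
                omega)
              (layerMatrix (2 ^ (L - 1)) 0
                (fun _ => 0)
                (fun c => -(2 * Real.pi) * ((c.val % 2 ^ i.val : ℕ) : ℝ) / 2 ^ (i.val + 1))
                (fun _ => 0)
                (fun _ => 0))) := by
      funext i
      rw [E_def' L i.val hL]
    rw [hσ, hmap]
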